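/- Fix an integer d ≥ 1 and M ∈ (0,∞). Let f : [0,1]^d → ℝ and let (f_n) be a sequence of functions [0,1]^d → ℝ with ‖f_n − f‖_∞ → 0 as n → ∞. If f_n ∈ D^d_M for every n, then f ∈ D^d_M. -/

import Mathlib

open MeasureTheory Filter Set
open scoped ENNReal NNReal

noncomputable section

namespace HAL

/-- The quadrant `Q_a(u)` inside the unit cube. -/
def quadrant (d : ℕ) (a : Fin d → Bool) (u : Fin d → ℝ) : Set (Fin d → ℝ) :=
  {y | ∀ k, if a k then u k ≤ y k ∧ y k ≤ 1 else 0 ≤ y k ∧ y k < u k}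

/-- Multivariate càdlàg on the unit cube. -/
def IsCadlag (d : ℕ) (f : (Fin d → ℝ) → ℝ) : Prop :=
  ∀ u ∈ Set.Icc (0 : Fin d → ℝ) 1, ∀ a : Fin d → Bool,
    ∀ x : ℕ → (Fin d → ℝ), (∀ n, x n ∈ quadrant d a u) →
      Filter.Tendsto x Filter.atTop (nhds u) →
      ∃ L : ℝ, Filter.Tendsto (fun n => f (x n)) Filter.atTop (nhds L) ∧
        ((∀ k, a k = true) → L = f u)

/-- A grid partition of the face `(0_s, 1_s]` (coordinates outside `s` fixed at `0`). -/
structure SectionGrid (d : ℕ) (s : Finset (Fin d)) where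
  L : Fin d → ℕ
  t : Fin d → ℕ → ℝ
  Lpos : ∀ k, 0 < L k
  Lout : ∀ k, k ∉ s → L k = 1
  t0 : ∀ k, t k 0 = 0
  tlast : ∀ k, t k (L k) = 1
  tmono : ∀ k, ∀ i, i < L k → t k i < t k (i + 1)

/-- The vertex of the box indexed by `j` corresponding to the subset `e ⊆ s`. -/
def gridVertex {d : ℕ} {s : Finset (Fin d)} (G : SectionGrid d s) (j : Fin d → ℕ)
    (e : Finset (Fin d)) : Fin d → ℝ :=
  fun k => if k ∈ s then (if k ∈ e then G.t k (j k) else G.t k (j k - 1)) else 0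

/-- The quasi-volume `Δ(f_s; A)` of the box of the grid `G` indexed by `j`. -/
def boxQuasiVolume {d : ℕ} (f : (Fin d → ℝ) → ℝ) {s : Finset (Fin d)}
    (G : SectionGrid d s) (j : Fin d → ℕ) : ℝ :=
  ∑ e ∈ s.powerset, (-1 : ℝ) ^ (s.card - e.card) * f (gridVertex G j e)

/-- `∑_{A ∈ P} |Δ(f_s; A)|` for the grid partition `G`. -/
def gridVariationSum {d : ℕ} (f : (Fin d → ℝ) → ℝ) {s : Finset (Fin d)}
    (G : SectionGrid d s) : ℝ :=
  ∑ j ∈ Fintype.piFinset (fun k => Finset.Icc 1 (G.L k)), |boxQuasiVolume f G j|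

/-- The Vitali variation `V(f_s)` of the section `f_s` of `f`. -/
def sectionVitali (d : ℕ) (f : (Fin d → ℝ) → ℝ) (s : Finset (Fin d)) : ℝ≥0∞ :=
  ⨆ G : SectionGrid d s, ENNReal.ofReal (gridVariationSum f G)

/-- The sectional variation norm `‖f‖_v = |f(0)| + ∑_{∅ ≠ s} V(f_s)`. -/
def svn (d : ℕ) (f : (Fin d → ℝ) → ℝ) : ℝ≥0∞ :=
  ENNReal.ofReal |f 0| +
    ∑ s ∈ (Finset.univ : Finset (Fin d)).powerset.erase ∅, sectionVitali d f s

/-- `D^d_M`: càdlàg functions with sectional variation norm at most `M`. -/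
def Dset (d : ℕ) (M : ℝ) : Set ((Fin d → ℝ) → ℝ) :=
  {f | IsCadlag d f ∧ svn d f ≤ ENNReal.ofReal M}

/-- The indicator `1_{[y, 1]}` of the upper box `[y, 1]`. -/
def upperBoxIndicator (d : ℕ) (y : Fin d → ℝ) : (Fin d → ℝ) → ℝ :=
  (Set.Icc y 1).indicator (fun _ => (1 : ℝ))

/-- The span of `F^d = {1_{[y,1]} : y ∈ [0,1]^d}`. -/
def spanF (d : ℕ) : Submodule ℝ ((Fin d → ℝ) → ℝ) :=
  Submodule.span ℝ {g | ∃ y ∈ Set.Icc (0 : Fin d → ℝ) 1, g = upperBoxIndicator d y}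

/-- `R^d_M`: elements of the span of upper-box indicators with `‖·‖_v ≤ M`. -/
def Rset (d : ℕ) (M : ℝ) : Set ((Fin d → ℝ) → ℝ) :=
  {f | f ∈ spanF d ∧ svn d f ≤ ENNReal.ofReal M}

end HAL

section Aux

open HAL

instance instNonemptySectionGrid {d : ℕ} {s : Finset (Fin d)} :
    Nonempty (SectionGrid d s) :=
  ⟨{ L := fun _ => 1
     t := fun _ i => if i = 0 then 0 else 1
     Lpos := fun _ => one_pos
     Lout := fun _ _ => rfl
     t0 := fun _ => rfl
     tlast := fun _ => by norm_num
     tmono := fun k i hi => by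
       interval_cases i
       norm_num }⟩

lemma sectionGrid_t_mono {d : ℕ} {s : Finset (Fin d)} (G : SectionGrid d s)
    (k : Fin d) : ∀ {j : ℕ}, ∀ {i : ℕ}, i ≤ j → j ≤ G.L k → G.t k i ≤ G.t k j := by
  intro j
  induction j with
  | zero => intro i hij _; simp [Nat.le_zero.mp hij]
  | succ m ih =>
    intro i hij hj
    rcases Nat.eq_or_lt_of_le hij with h | h
    · subst h; exact le_rfl
    · have h1 : i ≤ m := Nat.lt_succ_iff.mp h
      have h2 : m ≤ G.L k := le_trans (Nat.le_succ m) hj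
      exact le_trans (ih h1 h2)
        (le_of_lt (G.tmono k m (Nat.lt_of_succ_le hj)))

lemma sectionGrid_t_mem {d : ℕ} {s : Finset (Fin d)} (G : SectionGrid d s)
    (k : Fin d) {i : ℕ} (hi : i ≤ G.L k) : 0 ≤ G.t k i ∧ G.t k i ≤ 1 := by
  constructor
  · have := sectionGrid_t_mono G k (Nat.zero_le i) hi
    rwa [G.t0 k] at this
  · have := sectionGrid_t_mono G k hi le_rfl
    rwa [G.tlast k] at this

lemma gridVertex_mem {d : ℕ} {s : Finset (Fin d)} (G : SectionGrid d s)
    (j : Fin d → ℕ) (hj : ∀ k, j k ≤ G.L k) (e : Finset (Fin d)) :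
    gridVertex G j e ∈ Set.Icc (0 : Fin d → ℝ) 1 := by
  constructor <;> intro k <;> simp only [gridVertex, Pi.zero_apply, Pi.one_apply]
  · split_ifs with h1 h2
    · exact (sectionGrid_t_mem G k (hj k)).1
    · exact (sectionGrid_t_mem G k (le_trans (Nat.sub_le _ _) (hj k))).1
    · exact le_rfl
  · split_ifs with h1 h2
    · exact (sectionGrid_t_mem G k (hj k)).2
    · exact (sectionGrid_t_mem G k (le_trans (Nat.sub_le _ _) (hj k))).2
    · exact zero_le_one

lemma gridVariationSum_nonneg {d : ℕ} (g : (Fin d → ℝ) → ℝ) {s : Finset (Fin d)}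
    (G : SectionGrid d s) : 0 ≤ gridVariationSum g G :=
  Finset.sum_nonneg fun _ _ => abs_nonneg _

lemma sum_iSup_le_iSup_sum {ι : Type*} [DecidableEq ι] {κ : ι → Type*}
    [∀ i, Nonempty (κ i)] (T : Finset ι) (φ : ∀ i, κ i → ℝ≥0∞) :
    ∑ i ∈ T, (⨆ k, φ i k) ≤ ⨆ c : ∀ i, κ i, ∑ i ∈ T, φ i (c i) := by
  classical
  induction T using Finset.induction_on with
  | empty => simp
  | insert _ _ ha ih =>
    rename_i a T'
    rw [Finset.sum_insert ha]
    calc (⨆ k, φ a k) + ∑ i ∈ T', ⨆ k, φ i k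
        ≤ (⨆ k, φ a k) + ⨆ c : ∀ i, κ i, ∑ i ∈ T', φ i (c i) :=
          add_le_add le_rfl ih
      _ = ⨆ k, ⨆ c : ∀ i, κ i, (φ a k + ∑ i ∈ T', φ i (c i)) := by
          rw [ENNReal.iSup_add]
          exact iSup_congr fun k => ENNReal.add_iSup (ι := (i : ι) → κ i) (a := φ a k) (f := fun c => ∑ i ∈ T', φ i (c i))
      _ ≤ ⨆ c : ∀ i, κ i, ∑ i ∈ insert a T', φ i (c i) := by
          refine iSup_le fun k => iSup_le fun c => ?_
          refine le_iSup_of_le (Function.update c a k) ?_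
          rw [Finset.sum_insert ha, Function.update_self]
          refine add_le_add le_rfl (le_of_eq (Finset.sum_congr rfl fun i hi => ?_))
          have hia : i ≠ a := fun h => ha (h ▸ hi)
          rw [Function.update_of_ne hia k c]

end Aux

/-- If `f_n ∈ D^d_M` for every `n` and `‖f_n − f‖_∞ → 0` (uniform convergence
on the unit cube), then `f ∈ D^d_M`. -/
theorem cadlag_bounded_variation_closed_under_uniform_limits
    (d : ℕ) (hd : 1 ≤ d) (M : ℝ) (hM : 0 < M)
    (f : (Fin d → ℝ) → ℝ) (F : ℕ → (Fin d → ℝ) → ℝ)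
    (hmem : ∀ n, F n ∈ HAL.Dset d M)
    (hconv : ∀ ε > (0 : ℝ), ∃ N : ℕ, ∀ n ≥ N,
      ∀ x ∈ Set.Icc (0 : Fin d → ℝ) 1, |F n x - f x| ≤ ε) :
    f ∈ HAL.Dset d M := by
  classical
  have hM0 : (0 : ℝ) ≤ M := le_of_lt hM
  -- pointwise convergence on the cube
  have hpt : ∀ x ∈ Set.Icc (0 : Fin d → ℝ) 1,
      Filter.Tendsto (fun n => F n x) Filter.atTop (nhds (f x)) := by
    intro x hx
    rw [Metric.tendsto_atTop]
    intro ε hε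
    obtain ⟨N, hN⟩ := hconv (ε / 2) (by positivity)
    refine ⟨N, fun n hn => ?_⟩
    have := hN n hn x hx
    rw [Real.dist_eq]
    linarith
  constructor
  · -- càdlàg
    intro u hu a x hx hxu
    have hxI : ∀ n, x n ∈ Set.Icc (0 : Fin d → ℝ) 1 := by
      intro n
      have h := hx n
      constructor <;> intro k
      · have hk := h k
        by_cases hak : a k
        · simp only [hak, if_true] at hk
          exact le_trans (hu.1 k) hk.1
        · simp only [hak, if_false] at hk
          exact hk.1
      · have hk := h k
        by_cases hak : a k
        · simp only [hak, if_true] at hk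
          exact hk.2
        · simp only [hak, if_false] at hk
          exact le_of_lt (lt_of_lt_of_le hk.2 (hu.2 k))
    have hC : CauchySeq (fun k => f (x k)) := by
      rw [Metric.cauchySeq_iff]
      intro ε hε
      obtain ⟨N₁, hN₁⟩ := hconv (ε / 4) (by positivity)
      obtain ⟨Ln, hLn, -⟩ := (hmem N₁).1 u hu a x hx hxu
      obtain ⟨N₂, hN₂⟩ := Metric.cauchySeq_iff.mp hLn.cauchySeq (ε / 4) (by positivity)
      refine ⟨N₂, fun m hm l hl => ?_⟩
      have h1 := hN₁ N₁ le_rfl (x m) (hxI m)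
      have h2 := hN₁ N₁ le_rfl (x l) (hxI l)
      have h3 := hN₂ m hm l hl
      rw [Real.dist_eq] at h3 ⊢
      have e1 : |f (x m) - f (x l)| ≤ |f (x m) - F N₁ (x m)| +
          |F N₁ (x m) - F N₁ (x l)| + |F N₁ (x l) - f (x l)| := by
        have := abs_sub_le (f (x m)) (F N₁ (x m)) (f (x l))
        have := abs_sub_le (F N₁ (x m)) (F N₁ (x l)) (f (x l))
        linarith
      rw [abs_sub_comm (f (x m)) (F N₁ (x m))] at e1
      linarith
    obtain ⟨L, hL⟩ := cauchySeq_tendsto_of_complete hC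
    refine ⟨L, hL, fun ha => ?_⟩
    have key : ∀ ε > (0 : ℝ), |L - f u| ≤ 2 * ε := by
      intro ε hε
      obtain ⟨N, hN⟩ := hconv ε hε
      obtain ⟨Ln, hLn, hLn2⟩ := (hmem N).1 u hu a x hx hxu
      have hLnu : Ln = F N u := hLn2 ha
      have h1 : |L - Ln| ≤ ε := by
        have ht : Filter.Tendsto (fun k => |f (x k) - F N (x k)|)
            Filter.atTop (nhds |L - Ln|) := (hL.sub hLn).abs
        refine le_of_tendsto ht (Filter.Eventually.of_forall fun k => ?_)
        have := hN N le_rfl (x k) (hxI k)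
        rw [abs_sub_comm]
        linarith
      have h2 : |F N u - f u| ≤ ε := hN N le_rfl u hu
      have e1 := abs_sub_le L (F N u) (f u)
      rw [hLnu] at h1
      linarith
    by_contra hne
    have hpos : 0 < |L - f u| := abs_pos.mpr (sub_ne_zero.mpr hne)
    have := key (|L - f u| / 4) (by positivity)
    linarith
  · -- svn bound
    set T := (Finset.univ : Finset (Fin d)).powerset.erase ∅ with hT
    have key : ∀ c : (s : Finset (Fin d)) → HAL.SectionGrid d s,
        |f 0| + ∑ s ∈ T, HAL.gridVariationSum f (c s) ≤ M := by
      intro c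
      have hn : ∀ n, |F n 0| + ∑ s ∈ T, HAL.gridVariationSum (F n) (c s) ≤ M := by
        intro n
        have h := (hmem n).2
        rw [HAL.svn] at h
        have h2 : ENNReal.ofReal (|F n 0| + ∑ s ∈ T, HAL.gridVariationSum (F n) (c s))
            ≤ ENNReal.ofReal M := by
          rw [ENNReal.ofReal_add (abs_nonneg _)
            (Finset.sum_nonneg fun s _ => gridVariationSum_nonneg _ _),
            ENNReal.ofReal_sum_of_nonneg fun s _ => gridVariationSum_nonneg _ _]
          refine le_trans (add_le_add le_rfl (Finset.sum_le_sum fun s _ => ?_)) h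
          exact le_iSup (fun G => ENNReal.ofReal (HAL.gridVariationSum (F n) G)) (c s)
        exact (ENNReal.ofReal_le_ofReal_iff hM0).mp h2
      have hzero : (0 : Fin d → ℝ) ∈ Set.Icc (0 : Fin d → ℝ) 1 :=
        ⟨le_rfl, fun k => zero_le_one⟩
      have hten : Filter.Tendsto
          (fun n => |F n 0| + ∑ s ∈ T, HAL.gridVariationSum (F n) (c s))
          Filter.atTop (nhds (|f 0| + ∑ s ∈ T, HAL.gridVariationSum f (c s))) := by
        refine Filter.Tendsto.add ((hpt 0 hzero).abs) ?_
        refine tendsto_finset_sum _ fun s _ => ?_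
        unfold HAL.gridVariationSum
        refine tendsto_finset_sum _ fun j hj => Filter.Tendsto.abs ?_
        unfold HAL.boxQuasiVolume
        refine tendsto_finset_sum _ fun e _ => Filter.Tendsto.const_mul _ ?_
        refine hpt _ (gridVertex_mem (c s) j (fun k => ?_) e)
        have := Fintype.mem_piFinset.mp hj k
        exact (Finset.mem_Icc.mp this).2
      exact le_of_tendsto hten (Filter.Eventually.of_forall hn)
    show HAL.svn d f ≤ ENNReal.ofReal M
    rw [HAL.svn]
    simp only [HAL.sectionVitali]
    refine le_trans (add_le_add le_rfl
      (sum_iSup_le_iSup_sum T (fun s G => ENNReal.ofReal (HAL.gridVariationSum f G)))) ?_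
    rw [ENNReal.add_iSup]
    refine iSup_le fun c => ?_
    calc ENNReal.ofReal |f 0| + ∑ s ∈ T, ENNReal.ofReal (HAL.gridVariationSum f (c s))
        = ENNReal.ofReal (|f 0| + ∑ s ∈ T, HAL.gridVariationSum f (c s)) := by
          rw [ENNReal.ofReal_add (abs_nonneg _)
            (Finset.sum_nonneg fun s _ => gridVariationSum_nonneg _ _),
            ENNReal.ofReal_sum_of_nonneg fun s _ => gridVariationSum_nonneg _ _]
      _ ≤ ENNReal.ofReal M := ENNReal.ofReal_le_ofReal (key c)
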